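/- Let K ⊆ ℝⁿ be compact and convex, F : K → ℝⁿ continuous and monotone, and γ ∈ (0, 1/L] where L is a Lipschitz constant of F. Define the extragradient iteration x̄ᵗ = P_K(xᵗ − γF(xᵗ)), x^{t+1} = P_K(xᵗ − γF(x̄ᵗ)). If x* solves VI(F, K), then the sequence satisfies ‖x^{t+1} − x*‖² ≤ ‖xᵗ − x*‖² − (1 − γ²L²)‖xᵗ − x̄ᵗ‖². -/

import Mathlib

open scoped RealInnerProductSpace

/-- Variational inequality characterization of the metric projection. -/
lemma proj_vi {E : Type*} [NormedAddCommGroup E] [InnerProductSpace ℝ E]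
    {K : Set E} (hcv : Convex ℝ K) {z p : E} (hp : p ∈ K)
    (hmin : ∀ y ∈ K, ‖z - p‖ ≤ ‖z - y‖) {y : E} (hy : y ∈ K) :
    ⟪z - p, y - p⟫ ≤ 0 := by
  have hne : Nonempty K := ⟨⟨p, hp⟩⟩
  have hbdd : BddBelow (Set.range fun w : K => ‖z - w‖) := by
    refine ⟨0, ?_⟩
    rintro _ ⟨w, rfl⟩
    exact norm_nonneg _
  have heq : ‖z - p‖ = ⨅ w : K, ‖z - w‖ := by
    refine le_antisymm (le_ciInf fun w => hmin w w.2) ?_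
    exact ciInf_le hbdd ⟨p, hp⟩
  exact (norm_eq_iInf_iff_real_inner_le_zero hcv hp).mp heq y hy

lemma three_point {E : Type*} [NormedAddCommGroup E] [InnerProductSpace ℝ E]
    (a b c : E) : ‖a - c‖ ^ 2 = ‖a - b‖ ^ 2 + ‖b - c‖ ^ 2 + 2 * ⟪a - b, b - c⟫ := by
  have h : a - c = (a - b) + (b - c) := by abel
  rw [h, norm_add_sq_real]; ring

set_option maxHeartbeats 1000000 in
/-- Fejér-monotonicity estimate for one step of the extragradient (modified
projection) method: with γ ∈ (0, 1/L], monotone L-Lipschitz F, and x* a VI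
solution, ‖x⁺ − x*‖² ≤ ‖x − x*‖² − (1 − γ²L²)‖x − x̄‖². -/
theorem extragradient_fejer_estimate {n : ℕ}
    (K : Set (EuclideanSpace ℝ (Fin n)))
    (F P : EuclideanSpace ℝ (Fin n) → EuclideanSpace ℝ (Fin n))
    (hcp : IsCompact K) (hcv : Convex ℝ K)
    (hFc : ContinuousOn F K)
    (hmono : ∀ x ∈ K, ∀ y ∈ K, 0 ≤ (inner ℝ (F x - F y) (x - y) : ℝ))
    (L : ℝ) (hL : 0 < L)
    (hlip : ∀ x ∈ K, ∀ y ∈ K, ‖F x - F y‖ ≤ L * ‖x - y‖)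
    (γ : ℝ) (hγ0 : 0 < γ) (hγL : γ ≤ 1 / L)
    (hP : ∀ z, P z ∈ K ∧ ∀ y ∈ K, ‖z - P z‖ ≤ ‖z - y‖)
    (xstar : EuclideanSpace ℝ (Fin n)) (hxstar : xstar ∈ K)
    (hsol : ∀ x ∈ K, 0 ≤ (inner ℝ (F xstar) (x - xstar) : ℝ))
    (xt : EuclideanSpace ℝ (Fin n)) (hxt : xt ∈ K) :
    ‖P (xt - γ • F (P (xt - γ • F xt))) - xstar‖ ^ 2 ≤
      ‖xt - xstar‖ ^ 2 -
        (1 - γ ^ 2 * L ^ 2) * ‖xt - P (xt - γ • F xt)‖ ^ 2 := by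
  set xb := P (xt - γ • F xt) with hxb_def
  set xp := P (xt - γ • F xb) with hxp_def
  have hxb : xb ∈ K := (hP _).1
  have hxp : xp ∈ K := (hP _).1
  -- projection variational inequalities
  have pineq1 : ⟪(xt - γ • F xt) - xb, xp - xb⟫ ≤ 0 :=
    proj_vi hcv hxb (hP _).2 hxp
  have pineq2 : ⟪(xt - γ • F xb) - xp, xstar - xp⟫ ≤ 0 :=
    proj_vi hcv hxp (hP _).2 hxstar
  -- h3 : γ⟪F xb, xp−xb⟫ + γ⟪F xb, xb−x*⟫ ≤ ⟪xt−xp, xp−x*⟫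
  have e1 : ⟪F xb, xp - xstar⟫ = ⟪F xb, xp - xb⟫ + ⟪F xb, xb - xstar⟫ := by
    rw [← inner_add_right]
    congr 1
    abel
  have epineq2 : ⟪xt - xp, xstar - xp⟫ - γ * ⟪F xb, xstar - xp⟫ ≤ 0 := by
    have h : (xt - γ • F xb) - xp = (xt - xp) - γ • F xb := by abel
    rw [h, inner_sub_left, real_inner_smul_left] at pineq2
    linarith
  have flip1 : ⟪xt - xp, xstar - xp⟫ = - ⟪xt - xp, xp - xstar⟫ := by
    rw [show xstar - xp = -(xp - xstar) by abel, inner_neg_right]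
  have flip2 : ⟪F xb, xstar - xp⟫ = - ⟪F xb, xp - xstar⟫ := by
    rw [show xstar - xp = -(xp - xstar) by abel, inner_neg_right]
  have h3 : γ * ⟪F xb, xp - xb⟫ + γ * ⟪F xb, xb - xstar⟫ ≤ ⟪xt - xp, xp - xstar⟫ := by
    rw [flip1, flip2] at epineq2
    nlinarith [epineq2, e1]
  -- h4 : 0 ≤ γ⟪F xb, xb−x*⟫
  have h4 : 0 ≤ γ * ⟪F xb, xb - xstar⟫ := by
    have hm := hmono xb hxb xstar hxstar
    have hs := hsol xb hxb
    have h : ⟪F xb, xb - xstar⟫ = ⟪F xb - F xstar, xb - xstar⟫ + ⟪F xstar, xb - xstar⟫ := by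
      rw [← inner_add_left]
      congr 1
      abel
    nlinarith
  -- h5 : ⟪xt−xb, xp−xb⟫ ≤ γ⟪F xt, xp−xb⟫
  have h5 : ⟪xt - xb, xp - xb⟫ ≤ γ * ⟪F xt, xp - xb⟫ := by
    have h : (xt - γ • F xt) - xb = (xt - xb) - γ • F xt := by abel
    rw [h, inner_sub_left, real_inner_smul_left] at pineq1
    linarith
  -- h6 : 2γ⟪F xt, xp−xb⟫ − 2γ⟪F xb, xp−xb⟫ ≤ γ²L²‖xt−xb‖² + ‖xb−xp‖²
  have h6 : 2 * (γ * ⟪F xt, xp - xb⟫) - 2 * (γ * ⟪F xb, xp - xb⟫) ≤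
      γ ^ 2 * L ^ 2 * ‖xt - xb‖ ^ 2 + ‖xb - xp‖ ^ 2 := by
    have hcs : ⟪F xt - F xb, xp - xb⟫ ≤ ‖F xt - F xb‖ * ‖xp - xb‖ :=
      real_inner_le_norm _ _
    have hl : ‖F xt - F xb‖ ≤ L * ‖xt - xb‖ := hlip xt hxt xb hxb
    have hsplit : ⟪F xt - F xb, xp - xb⟫ = ⟪F xt, xp - xb⟫ - ⟪F xb, xp - xb⟫ :=
      inner_sub_left _ _ _
    have hnn : (0:ℝ) ≤ ‖xp - xb‖ := norm_nonneg _
    have hb : ⟪F xt - F xb, xp - xb⟫ ≤ (L * ‖xt - xb‖) * ‖xp - xb‖ :=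
      le_trans hcs (mul_le_mul_of_nonneg_right hl hnn)
    have h2γ : (0:ℝ) ≤ 2 * γ := by positivity
    have hmul := mul_le_mul_of_nonneg_left hb h2γ
    have hamgm : 2 * (γ * L * ‖xt - xb‖) * ‖xp - xb‖ ≤
        (γ * L * ‖xt - xb‖) ^ 2 + ‖xp - xb‖ ^ 2 := two_mul_le_add_sq _ _
    have hnorm : ‖xb - xp‖ = ‖xp - xb‖ := norm_sub_rev _ _
    rw [hnorm]
    nlinarith [hmul, hamgm, hsplit]
  -- identities
  have h1 : ‖xt - xstar‖ ^ 2 =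
      ‖xt - xp‖ ^ 2 + ‖xp - xstar‖ ^ 2 + 2 * ⟪xt - xp, xp - xstar⟫ :=
    three_point xt xp xstar
  have h2 : ‖xt - xp‖ ^ 2 = ‖xt - xb‖ ^ 2 + ‖xb - xp‖ ^ 2 + 2 * ⟪xt - xb, xb - xp⟫ :=
    three_point xt xb xp
  have e2 : ⟪xt - xb, xb - xp⟫ = - ⟪xt - xb, xp - xb⟫ := by
    rw [show xb - xp = -(xp - xb) by abel, inner_neg_right]
  -- combine
  linarith [h1, h2, h3, h4, h5, h6, e2]
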